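/- Let M1, M2 be random variables with values in [0,1], set M_C := M1 · M2, let A1, A2 be events and e1, e2 ≥ 0. Assume: MCE(M1, A1) ≤ e1 and MCE(M2, A2) ≤ e2; the conditional independences A1 ⟂ A2 | M_C, A1 ⟂ M_C | M1, and A2 ⟂ M_C | M2 hold; and Var(M1 | σ(M_C)) ≤ Var(M1) and Var(M2 | σ(M_C)) ≤ Var(M2) almost surely. Then the expected calibration error of the product composition with respect to the conjunction satisfies ECE(M1·M2, A1 ∩ A2) = E[ |P(A1 ∩ A2 | σ(M_C)) − M_C| ] ≤ max( 4·e1·e2 , √(Var(M1)·Var(M2)) + e1 + e2 + e1·e2 ). -/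

import Mathlib

open MeasureTheory ProbabilityTheory
open scoped ENNReal

/-- The sigma-algebra generated by a random variable. -/
def sigGen {Ω α : Type*} [MeasurableSpace α] (M : Ω → α) : MeasurableSpace Ω :=
  MeasurableSpace.comap M inferInstance

/-- Conditional probability of an event given a sub-sigma-algebra, as a random variable:
`P(A | 𝒢) = E[1_A | 𝒢]`. -/
noncomputable def cprob {Ω : Type*} [MeasurableSpace Ω] (μ : Measure Ω)
    (m : MeasurableSpace Ω) (A : Set Ω) : Ω → ℝ :=
  μ[A.indicator (fun _ => (1 : ℝ)) | m]


/-- Conditional variance of a real random variable given a sub-sigma-algebra: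
`Var(X | 𝒢) = E[(X − E[X | 𝒢])² | 𝒢]`. -/
noncomputable def condVar {Ω : Type*} [MeasurableSpace Ω] (μ : Measure Ω)
    (m : MeasurableSpace Ω) (X : Ω → ℝ) : Ω → ℝ :=
  μ[fun ω => (X ω - (μ[X | m]) ω) ^ 2 | m]

private lemma quad_key {a b c : ℝ}
    (h : ∀ q : ℚ, 0 ≤ c * ((q : ℝ) * (q : ℝ)) + 2 * b * (q : ℝ) + a) : b ^ 2 ≤ a * c := by
  have hall : ∀ t : ℝ, 0 ≤ c * (t * t) + 2 * b * t + a := by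
    have hcl : IsClosed {t : ℝ | 0 ≤ c * (t * t) + 2 * b * t + a} :=
      isClosed_le continuous_const (by continuity)
    have hsub : Set.range ((↑) : ℚ → ℝ) ⊆ {t : ℝ | 0 ≤ c * (t * t) + 2 * b * t + a} := by
      rintro _ ⟨q, rfl⟩; exact h q
    have h2 := closure_minimal hsub hcl
    rw [Rat.denseRange_cast.closure_eq] at h2
    exact fun t => h2 (Set.mem_univ t)
  have hd := discrim_le_zero hall
  rw [discrim] at hd
  nlinarith [hd]

private lemma integrable_of_aebdd {Ω : Type*} [MeasurableSpace Ω] {μ : Measure Ω}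
    [IsFiniteMeasure μ] {f : Ω → ℝ} (hf : AEStronglyMeasurable f μ) {C : ℝ}
    (h : ∀ᵐ ω ∂μ, |f ω| ≤ C) : Integrable f μ :=
  (integrable_const C).mono' hf (h.mono fun ω hω => by simpa [Real.norm_eq_abs] using hω)

/-- The conditional expectation of a `[0,1]`-valued function is a.e. in `[0,1]`. -/
private lemma condexp_mem_Icc {Ω : Type*} {m mΩ : MeasurableSpace Ω} {μ : Measure Ω}
    [IsProbabilityMeasure μ] (hm : m ≤ mΩ) {f : Ω → ℝ}
    (hfi : Integrable f μ) (hfr : ∀ᵐ ω ∂μ, f ω ∈ Set.Icc (0 : ℝ) 1) :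
    ∀ᵐ ω ∂μ, (μ[f | m]) ω ∈ Set.Icc (0 : ℝ) 1 := by
  have h0 : 0 ≤ᵐ[μ] μ[f | m] := condExp_nonneg (hfr.mono fun ω hω => hω.1)
  have h1 : μ[f | m] ≤ᵐ[μ] μ[(fun _ => (1 : ℝ)) | m] :=
    condExp_mono hfi (integrable_const 1) (hfr.mono fun ω hω => hω.2)
  rw [condExp_const hm] at h1
  filter_upwards [h0, h1] with ω hω0 hω1
  exact ⟨hω0, hω1⟩

/-- Conditional Cauchy–Schwarz inequality for `[0,1]`-valued random variables. -/
private lemma cond_CS {Ω : Type*} {m mΩ : MeasurableSpace Ω} (μ : Measure Ω)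
    [IsProbabilityMeasure μ] (hm : m ≤ mΩ)
    {f g : Ω → ℝ} (hf : Measurable f) (hg : Measurable g)
    (hfr : ∀ ω, f ω ∈ Set.Icc (0 : ℝ) 1) (hgr : ∀ ω, g ω ∈ Set.Icc (0 : ℝ) 1) :
    ∀ᵐ ω ∂μ, ((μ[fun ω => f ω * g ω | m]) ω - (μ[f | m]) ω * (μ[g | m]) ω) ^ 2 ≤
      condVar μ m f ω * condVar μ m g ω := by
  have hfb : ∀ ω, |f ω| ≤ 1 := fun ω => abs_le.2 ⟨by linarith [(hfr ω).1], (hfr ω).2⟩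
  have hgb : ∀ ω, |g ω| ≤ 1 := fun ω => abs_le.2 ⟨by linarith [(hgr ω).1], (hgr ω).2⟩
  have hfi : Integrable f μ :=
    integrable_of_aebdd hf.aestronglyMeasurable (Filter.Eventually.of_forall hfb)
  have hgi : Integrable g μ :=
    integrable_of_aebdd hg.aestronglyMeasurable (Filter.Eventually.of_forall hgb)
  have hFi : Integrable (fun ω => f ω * g ω) μ := by
    refine integrable_of_aebdd (C := 1) ((hf.mul hg).aestronglyMeasurable)
      (Filter.Eventually.of_forall fun ω => ?_)
    rw [abs_mul]
    exact mul_le_one₀ (hfb ω) (abs_nonneg _) (hgb ω)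
  -- a.e. bounds on the conditional means
  have hmfr : ∀ᵐ ω ∂μ, (μ[f | m]) ω ∈ Set.Icc (0 : ℝ) 1 :=
    condexp_mem_Icc hm hfi (Filter.Eventually.of_forall hfr)
  have hmgr : ∀ᵐ ω ∂μ, (μ[g | m]) ω ∈ Set.Icc (0 : ℝ) 1 :=
    condexp_mem_Icc hm hgi (Filter.Eventually.of_forall hgr)
  -- measurability of the centered variables
  have hmfsm : AEStronglyMeasurable (μ[f | m]) μ :=
    (stronglyMeasurable_condExp.mono hm).aestronglyMeasurable
  have hmgsm : AEStronglyMeasurable (μ[g | m]) μ :=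
    (stronglyMeasurable_condExp.mono hm).aestronglyMeasurable
  have hXsm : AEStronglyMeasurable (fun ω => f ω - (μ[f | m]) ω) μ :=
    hf.aestronglyMeasurable.sub hmfsm
  have hYsm : AEStronglyMeasurable (fun ω => g ω - (μ[g | m]) ω) μ :=
    hg.aestronglyMeasurable.sub hmgsm
  have hXb : ∀ᵐ ω ∂μ, |f ω - (μ[f | m]) ω| ≤ 1 := by
    filter_upwards [hmfr] with ω hω
    rw [abs_le]; exact ⟨by linarith [(hfr ω).1, hω.2], by linarith [(hfr ω).2, hω.1]⟩
  have hYb : ∀ᵐ ω ∂μ, |g ω - (μ[g | m]) ω| ≤ 1 := by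
    filter_upwards [hmgr] with ω hω
    rw [abs_le]; exact ⟨by linarith [(hgr ω).1, hω.2], by linarith [(hgr ω).2, hω.1]⟩
  -- integrability of squares and products
  have hX2i : Integrable (fun ω => (f ω - (μ[f | m]) ω) ^ 2) μ := by
    refine integrable_of_aebdd (C := 1) ?_ ?_
    · have : (fun ω => (f ω - (μ[f | m]) ω) ^ 2)
          = fun ω => (f ω - (μ[f | m]) ω) * (f ω - (μ[f | m]) ω) := by funext ω; ring
      rw [this]; exact hXsm.mul hXsm
    · filter_upwards [hXb] with ω hω
      rw [abs_pow]
      calc |f ω - (μ[f | m]) ω| ^ 2 ≤ 1 ^ 2 := by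
            exact pow_le_pow_left₀ (abs_nonneg _) hω 2
        _ = 1 := one_pow 2
  have hY2i : Integrable (fun ω => (g ω - (μ[g | m]) ω) ^ 2) μ := by
    refine integrable_of_aebdd (C := 1) ?_ ?_
    · have : (fun ω => (g ω - (μ[g | m]) ω) ^ 2)
          = fun ω => (g ω - (μ[g | m]) ω) * (g ω - (μ[g | m]) ω) := by funext ω; ring
      rw [this]; exact hYsm.mul hYsm
    · filter_upwards [hYb] with ω hω
      rw [abs_pow]
      calc |g ω - (μ[g | m]) ω| ^ 2 ≤ 1 ^ 2 := by
            exact pow_le_pow_left₀ (abs_nonneg _) hω 2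
        _ = 1 := one_pow 2
  have hXYi : Integrable (fun ω => (f ω - (μ[f | m]) ω) * (g ω - (μ[g | m]) ω)) μ := by
    refine integrable_of_aebdd (C := 1) (hXsm.mul hYsm) ?_
    filter_upwards [hXb, hYb] with ω h1 h2
    rw [abs_mul]
    exact mul_le_one₀ h1 (abs_nonneg _) h2
  -- integrability of auxiliary products
  have hm1gi : Integrable (μ[f | m] * g) μ := by
    refine integrable_of_aebdd (hmfsm.mul hg.aestronglyMeasurable) (C := 1) ?_
    filter_upwards [hmfr] with ω hω
    rw [Pi.mul_apply, abs_mul]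
    exact mul_le_one₀ (abs_le.2 ⟨by linarith [hω.1], hω.2⟩) (abs_nonneg _) (hgb ω)
  have hm2fi : Integrable (μ[g | m] * f) μ := by
    refine integrable_of_aebdd (hmgsm.mul hf.aestronglyMeasurable) (C := 1) ?_
    filter_upwards [hmgr] with ω hω
    rw [Pi.mul_apply, abs_mul]
    exact mul_le_one₀ (abs_le.2 ⟨by linarith [hω.1], hω.2⟩) (abs_nonneg _) (hfb ω)
  have hm1m2i : Integrable (μ[f | m] * μ[g | m]) μ := by
    refine integrable_of_aebdd (hmfsm.mul hmgsm) (C := 1) ?_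
    filter_upwards [hmfr, hmgr] with ω h1 h2
    rw [Pi.mul_apply, abs_mul]
    exact mul_le_one₀ (abs_le.2 ⟨by linarith [h1.1], h1.2⟩) (abs_nonneg _)
      (abs_le.2 ⟨by linarith [h2.1], h2.2⟩)
  -- pull-out properties
  have hpull1 : μ[μ[f | m] * g | m] =ᵐ[μ] μ[f | m] * μ[g | m] := by
    refine condExp_stronglyMeasurable_mul_of_bound hm stronglyMeasurable_condExp hgi 1 ?_
    filter_upwards [hmfr] with ω hω
    rw [Real.norm_eq_abs]
    exact abs_le.2 ⟨by linarith [hω.1], hω.2⟩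
  have hpull2 : μ[μ[g | m] * f | m] =ᵐ[μ] μ[g | m] * μ[f | m] := by
    refine condExp_stronglyMeasurable_mul_of_bound hm stronglyMeasurable_condExp hfi 1 ?_
    filter_upwards [hmgr] with ω hω
    rw [Real.norm_eq_abs]
    exact abs_le.2 ⟨by linarith [hω.1], hω.2⟩
  have hmm : μ[μ[f | m] * μ[g | m] | m] = μ[f | m] * μ[g | m] :=
    condExp_of_stronglyMeasurable hm
      (stronglyMeasurable_condExp.mul stronglyMeasurable_condExp) hm1m2i
  -- expansion of E[(f - mf)(g - mg) | m]
  have h_eq : (fun ω => (f ω - (μ[f | m]) ω) * (g ω - (μ[g | m]) ω))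
      = (((fun ω => f ω * g ω) - μ[f | m] * g) - μ[g | m] * f) + μ[f | m] * μ[g | m] := by
    funext ω
    simp only [Pi.add_apply, Pi.sub_apply, Pi.mul_apply]
    ring
  have hXYeq : ∀ᵐ ω ∂μ, (μ[fun ω => (f ω - (μ[f | m]) ω) * (g ω - (μ[g | m]) ω) | m]) ω
      = (μ[fun ω => f ω * g ω | m]) ω - (μ[f | m]) ω * (μ[g | m]) ω := by
    have h1 := condExp_add (μ := μ) (m := m) ((hFi.sub hm1gi).sub hm2fi) hm1m2i
    have h2 := condExp_sub (μ := μ) (m := m) (hFi.sub hm1gi) hm2fi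
    have h3 := condExp_sub (μ := μ) (m := m) hFi hm1gi
    filter_upwards [h1, h2, h3, hpull1, hpull2] with ω e1 e2 e3 e4 e5
    rw [h_eq]
    have e6 := congrFun hmm ω
    simp only [Pi.add_apply, Pi.sub_apply, Pi.mul_apply] at e1 e2 e3 e4 e5 e6 ⊢
    rw [e1, e2, e3, e4, e5, e6]
    ring
  -- the quadratic inequality for each rational q
  have hq : ∀ q : ℚ, ∀ᵐ ω ∂μ,
      0 ≤ (μ[fun ω => (f ω - (μ[f | m]) ω) ^ 2 | m]) ω
        + ((2 * (q : ℝ)) * (μ[fun ω => (f ω - (μ[f | m]) ω) * (g ω - (μ[g | m]) ω) | m]) ω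
          + ((q : ℝ) * (q : ℝ)) * (μ[fun ω => (g ω - (μ[g | m]) ω) ^ 2 | m]) ω) := by
    intro q
    have h_eq_q : (fun ω => ((f ω - (μ[f | m]) ω) + (q : ℝ) * (g ω - (μ[g | m]) ω)) ^ 2)
        = (fun ω => (f ω - (μ[f | m]) ω) ^ 2)
          + ((2 * (q : ℝ)) • (fun ω => (f ω - (μ[f | m]) ω) * (g ω - (μ[g | m]) ω))
            + ((q : ℝ) * (q : ℝ)) • (fun ω => (g ω - (μ[g | m]) ω) ^ 2)) := by
      funext ω
      simp only [Pi.add_apply, Pi.smul_apply, smul_eq_mul]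
      ring
    have h0 : 0 ≤ᵐ[μ]
        μ[fun ω => ((f ω - (μ[f | m]) ω) + (q : ℝ) * (g ω - (μ[g | m]) ω)) ^ 2 | m] :=
      condExp_nonneg (Filter.Eventually.of_forall fun ω => sq_nonneg _)
    rw [h_eq_q] at h0
    have ha := condExp_add (μ := μ) (m := m) hX2i ((hXYi.smul (2 * (q : ℝ))).add
      (hY2i.smul ((q : ℝ) * (q : ℝ))))
    have hb := condExp_add (μ := μ) (m := m) (hXYi.smul (2 * (q : ℝ)))
      (hY2i.smul ((q : ℝ) * (q : ℝ)))
    have hs1 := condExp_smul (μ := μ) (m := m) (2 * (q : ℝ))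
      (fun ω => (f ω - (μ[f | m]) ω) * (g ω - (μ[g | m]) ω))
    have hs2 := condExp_smul (μ := μ) (m := m) ((q : ℝ) * (q : ℝ))
      (fun ω => (g ω - (μ[g | m]) ω) ^ 2)
    filter_upwards [h0, ha, hb, hs1, hs2] with ω e0 ea eb es1 es2
    simp only [Pi.add_apply, Pi.smul_apply, smul_eq_mul] at e0 ea eb es1 es2 ⊢
    rw [ea, eb, es1, es2] at e0
    exact e0
  have hqa : ∀ᵐ ω ∂μ, ∀ q : ℚ,
      0 ≤ (μ[fun ω => (f ω - (μ[f | m]) ω) ^ 2 | m]) ω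
        + ((2 * (q : ℝ)) * (μ[fun ω => (f ω - (μ[f | m]) ω) * (g ω - (μ[g | m]) ω) | m]) ω
          + ((q : ℝ) * (q : ℝ)) * (μ[fun ω => (g ω - (μ[g | m]) ω) ^ 2 | m]) ω) :=
    ae_all_iff.2 hq
  filter_upwards [hqa, hXYeq] with ω hω hωXY
  have hkey : ((μ[fun ω => (f ω - (μ[f | m]) ω) * (g ω - (μ[g | m]) ω) | m]) ω) ^ 2 ≤
      (μ[fun ω => (f ω - (μ[f | m]) ω) ^ 2 | m]) ω *
        (μ[fun ω => (g ω - (μ[g | m]) ω) ^ 2 | m]) ω := by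
    apply quad_key
    intro q
    have := hω q
    linarith
  rw [hωXY] at hkey
  exact hkey

/-- Theorem 4.2 (ECE bound for product composition):
`ECE(M1·M2, A1 ∧ A2) ≤ max(4·e1·e2, √(Var(M1)·Var(M2)) + e1 + e2 + e1·e2)`. -/
theorem ece_product_bound
    {Ω : Type*} [MeasurableSpace Ω] (μ : Measure Ω) [IsProbabilityMeasure μ]
    (M1 M2 MC : Ω → ℝ) (hM1 : Measurable M1) (hM2 : Measurable M2)
    (hM1r : ∀ ω, M1 ω ∈ Set.Icc (0 : ℝ) 1) (hM2r : ∀ ω, M2 ω ∈ Set.Icc (0 : ℝ) 1)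
    (hMCdef : MC = fun ω => M1 ω * M2 ω)
    (A1 A2 : Set Ω) (hA1 : MeasurableSet A1) (hA2 : MeasurableSet A2)
    (e1 e2 : ℝ) (he1 : 0 ≤ e1) (he2 : 0 ≤ e2)
    (hMCE1 : ∀ᵐ ω ∂μ, |cprob μ (sigGen M1) A1 ω - M1 ω| ≤ e1)
    (hMCE2 : ∀ᵐ ω ∂μ, |cprob μ (sigGen M2) A2 ω - M2 ω| ≤ e2)
    (hCIA : cprob μ (sigGen MC) (A1 ∩ A2) =ᵐ[μ]
      fun ω => cprob μ (sigGen MC) A1 ω * cprob μ (sigGen MC) A2 ω)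
    (hCI1 : cprob μ (sigGen (fun ω => (M1 ω, MC ω))) A1 =ᵐ[μ] cprob μ (sigGen M1) A1)
    (hCI2 : cprob μ (sigGen (fun ω => (M2 ω, MC ω))) A2 =ᵐ[μ] cprob μ (sigGen M2) A2)
    (hVar1 : ∀ᵐ ω ∂μ, condVar μ (sigGen MC) M1 ω ≤ variance M1 μ)
    (hVar2 : ∀ᵐ ω ∂μ, condVar μ (sigGen MC) M2 ω ≤ variance M2 μ) :
    ∫ ω, |cprob μ (sigGen MC) (A1 ∩ A2) ω - MC ω| ∂μ ≤
      max (4 * e1 * e2)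
        (Real.sqrt (variance M1 μ * variance M2 μ) + e1 + e2 + e1 * e2) := by
  have hMC : Measurable MC := by rw [hMCdef]; exact hM1.mul hM2
  have hmle : sigGen MC ≤ ‹MeasurableSpace Ω› := hMC.comap_le
  have hMCr : ∀ ω, MC ω ∈ Set.Icc (0 : ℝ) 1 := by
    intro ω
    rw [hMCdef]
    constructor
    · exact mul_nonneg (hM1r ω).1 (hM2r ω).1
    · exact mul_le_one₀ (hM1r ω).2 (hM2r ω).1 (hM2r ω).2
  have hM1i : Integrable M1 μ := integrable_of_aebdd hM1.aestronglyMeasurable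
    (Filter.Eventually.of_forall fun ω => abs_le.2 ⟨by linarith [(hM1r ω).1], (hM1r ω).2⟩)
  have hM2i : Integrable M2 μ := integrable_of_aebdd hM2.aestronglyMeasurable
    (Filter.Eventually.of_forall fun ω => abs_le.2 ⟨by linarith [(hM2r ω).1], (hM2r ω).2⟩)
  have hMCi : Integrable MC μ := integrable_of_aebdd hMC.aestronglyMeasurable
    (Filter.Eventually.of_forall fun ω => abs_le.2 ⟨by linarith [(hMCr ω).1], (hMCr ω).2⟩)
  -- sigma-algebra inclusions
  have hpair1 : Measurable (fun ω => (M1 ω, MC ω)) := hM1.prodMk hMC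
  have hpair2 : Measurable (fun ω => (M2 ω, MC ω)) := hM2.prodMk hMC
  have hple1 : sigGen (fun ω => (M1 ω, MC ω)) ≤ ‹MeasurableSpace Ω› := hpair1.comap_le
  have hple2 : sigGen (fun ω => (M2 ω, MC ω)) ≤ ‹MeasurableSpace Ω› := hpair2.comap_le
  have hle1 : sigGen MC ≤ sigGen (fun ω => (M1 ω, MC ω)) := by
    have h2 : sigGen MC = MeasurableSpace.comap (fun ω => (M1 ω, MC ω))
        (MeasurableSpace.comap (Prod.snd : ℝ × ℝ → ℝ) inferInstance) := by
      rw [sigGen, MeasurableSpace.comap_comp]; rfl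
    rw [h2, sigGen]
    exact MeasurableSpace.comap_mono measurable_snd.comap_le
  have hle2 : sigGen MC ≤ sigGen (fun ω => (M2 ω, MC ω)) := by
    have h2 : sigGen MC = MeasurableSpace.comap (fun ω => (M2 ω, MC ω))
        (MeasurableSpace.comap (Prod.snd : ℝ × ℝ → ℝ) inferInstance) := by
      rw [sigGen, MeasurableSpace.comap_comp]; rfl
    rw [h2, sigGen]
    exact MeasurableSpace.comap_mono measurable_snd.comap_le
  -- tower property
  have htow1 : cprob μ (sigGen MC) A1 =ᵐ[μ] μ[cprob μ (sigGen M1) A1 | sigGen MC] := by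
    have h1 : μ[μ[A1.indicator (fun _ => (1 : ℝ)) | sigGen (fun ω => (M1 ω, MC ω))] | sigGen MC]
        =ᵐ[μ] μ[A1.indicator (fun _ => (1 : ℝ)) | sigGen MC] :=
      condExp_condExp_of_le hle1 hple1
    exact h1.symm.trans (condExp_congr_ae hCI1)
  have htow2 : cprob μ (sigGen MC) A2 =ᵐ[μ] μ[cprob μ (sigGen M2) A2 | sigGen MC] := by
    have h1 : μ[μ[A2.indicator (fun _ => (1 : ℝ)) | sigGen (fun ω => (M2 ω, MC ω))] | sigGen MC]
        =ᵐ[μ] μ[A2.indicator (fun _ => (1 : ℝ)) | sigGen MC] :=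
      condExp_condExp_of_le hle2 hple2
    exact h1.symm.trans (condExp_congr_ae hCI2)
  -- deviation bounds
  have hdev1 : ∀ᵐ ω ∂μ,
      |(μ[cprob μ (sigGen M1) A1 | sigGen MC]) ω - (μ[M1 | sigGen MC]) ω| ≤ e1 := by
    have hq1i : Integrable (cprob μ (sigGen M1) A1) μ := integrable_condExp
    have hsub := condExp_sub (μ := μ) (m := sigGen MC) hq1i hM1i
    have hup : μ[cprob μ (sigGen M1) A1 - M1 | sigGen MC] ≤ᵐ[μ] (fun _ => e1) := by
      have h := condExp_mono (μ := μ) (m := sigGen MC) (hq1i.sub hM1i) (integrable_const e1)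
        (hMCE1.mono fun ω hω => (abs_le.1 hω).2)
      rwa [condExp_const hmle] at h
    have hlo : (fun _ => -e1) ≤ᵐ[μ] μ[cprob μ (sigGen M1) A1 - M1 | sigGen MC] := by
      have h := condExp_mono (μ := μ) (m := sigGen MC) (integrable_const (-e1)) (hq1i.sub hM1i)
        (hMCE1.mono fun ω hω => (abs_le.1 hω).1)
      rwa [condExp_const hmle] at h
    filter_upwards [hsub, hup, hlo] with ω h1 h2 h3
    have h4 : (μ[cprob μ (sigGen M1) A1 | sigGen MC]) ω - (μ[M1 | sigGen MC]) ω
        = (μ[cprob μ (sigGen M1) A1 - M1 | sigGen MC]) ω := by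
      rw [h1]; rfl
    rw [abs_le, h4]
    exact ⟨h3, h2⟩
  have hdev2 : ∀ᵐ ω ∂μ,
      |(μ[cprob μ (sigGen M2) A2 | sigGen MC]) ω - (μ[M2 | sigGen MC]) ω| ≤ e2 := by
    have hq2i : Integrable (cprob μ (sigGen M2) A2) μ := integrable_condExp
    have hsub := condExp_sub (μ := μ) (m := sigGen MC) hq2i hM2i
    have hup : μ[cprob μ (sigGen M2) A2 - M2 | sigGen MC] ≤ᵐ[μ] (fun _ => e2) := by
      have h := condExp_mono (μ := μ) (m := sigGen MC) (hq2i.sub hM2i) (integrable_const e2)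
        (hMCE2.mono fun ω hω => (abs_le.1 hω).2)
      rwa [condExp_const hmle] at h
    have hlo : (fun _ => -e2) ≤ᵐ[μ] μ[cprob μ (sigGen M2) A2 - M2 | sigGen MC] := by
      have h := condExp_mono (μ := μ) (m := sigGen MC) (integrable_const (-e2)) (hq2i.sub hM2i)
        (hMCE2.mono fun ω hω => (abs_le.1 hω).1)
      rwa [condExp_const hmle] at h
    filter_upwards [hsub, hup, hlo] with ω h1 h2 h3
    have h4 : (μ[cprob μ (sigGen M2) A2 | sigGen MC]) ω - (μ[M2 | sigGen MC]) ω
        = (μ[cprob μ (sigGen M2) A2 - M2 | sigGen MC]) ω := by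
      rw [h1]; rfl
    rw [abs_le, h4]
    exact ⟨h3, h2⟩
  have hb1 : ∀ᵐ ω ∂μ, |cprob μ (sigGen MC) A1 ω - (μ[M1 | sigGen MC]) ω| ≤ e1 := by
    filter_upwards [htow1, hdev1] with ω h1 h2
    rw [h1]; exact h2
  have hb2 : ∀ᵐ ω ∂μ, |cprob μ (sigGen MC) A2 ω - (μ[M2 | sigGen MC]) ω| ≤ e2 := by
    filter_upwards [htow2, hdev2] with ω h1 h2
    rw [h1]; exact h2
  -- ranges
  have hindr : ∀ (A : Set Ω) (ω : Ω), A.indicator (fun _ => (1 : ℝ)) ω ∈ Set.Icc (0 : ℝ) 1 := by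
    intro A ω
    classical
    by_cases h : ω ∈ A <;> simp [Set.indicator_apply, h]
  have hp1r : ∀ᵐ ω ∂μ, cprob μ (sigGen MC) A1 ω ∈ Set.Icc (0 : ℝ) 1 :=
    condexp_mem_Icc hmle ((integrable_const 1).indicator hA1)
      (Filter.Eventually.of_forall (hindr A1))
  have hm1r' : ∀ᵐ ω ∂μ, (μ[M1 | sigGen MC]) ω ∈ Set.Icc (0 : ℝ) 1 :=
    condexp_mem_Icc hmle hM1i (Filter.Eventually.of_forall hM1r)
  have hm2r' : ∀ᵐ ω ∂μ, (μ[M2 | sigGen MC]) ω ∈ Set.Icc (0 : ℝ) 1 :=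
    condexp_mem_Icc hmle hM2i (Filter.Eventually.of_forall hM2r)
  -- conditional Cauchy-Schwarz and variance domination
  have hMCm : Measurable[sigGen MC] MC := Measurable.of_comap_le le_rfl
  have hMCcond : μ[MC | sigGen MC] = MC :=
    condExp_of_stronglyMeasurable hmle hMCm.stronglyMeasurable hMCi
  have hVsqrt : ∀ᵐ ω ∂μ, |MC ω - (μ[M1 | sigGen MC]) ω * (μ[M2 | sigGen MC]) ω| ≤
      Real.sqrt (variance M1 μ * variance M2 μ) := by
    have hCS := cond_CS μ hmle hM1 hM2 hM1r hM2r
    have hMCeq : μ[fun ω => M1 ω * M2 ω | sigGen MC] = MC := by rw [← hMCdef]; exact hMCcond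
    have hcv1 : 0 ≤ᵐ[μ] condVar μ (sigGen MC) M1 :=
      condExp_nonneg (Filter.Eventually.of_forall fun ω => sq_nonneg _)
    have hcv2 : 0 ≤ᵐ[μ] condVar μ (sigGen MC) M2 :=
      condExp_nonneg (Filter.Eventually.of_forall fun ω => sq_nonneg _)
    have hV1 : 0 ≤ variance M1 μ := variance_nonneg _ _
    filter_upwards [hCS, hVar1, hVar2, hcv1, hcv2] with ω h1 h2 h3 h4 h5
    rw [hMCeq] at h1
    apply Real.abs_le_sqrt
    nlinarith [mul_le_mul_of_nonneg_right h2 h5, mul_le_mul_of_nonneg_left h3 hV1]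
  -- final pointwise bound
  have hfinal : ∀ᵐ ω ∂μ, |cprob μ (sigGen MC) (A1 ∩ A2) ω - MC ω| ≤
      Real.sqrt (variance M1 μ * variance M2 μ) + e1 + e2 := by
    filter_upwards [hCIA, hb1, hb2, hp1r, hm2r', hVsqrt] with ω hωA hω1 hω2 hωp hωm hωV
    rw [hωA]
    set p1 := cprob μ (sigGen MC) A1 ω
    set p2 := cprob μ (sigGen MC) A2 ω
    set m1 := (μ[M1 | sigGen MC]) ω
    set m2 := (μ[M2 | sigGen MC]) ω
    have hsplit : p1 * p2 - MC ω
        = p1 * (p2 - m2) + (p1 - m1) * m2 + (m1 * m2 - MC ω) := by ring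
    rw [hsplit]
    have habs : |p1 * (p2 - m2) + (p1 - m1) * m2 + (m1 * m2 - MC ω)|
        ≤ |p1 * (p2 - m2)| + |(p1 - m1) * m2| + |m1 * m2 - MC ω| :=
      (abs_add_le _ _).trans (add_le_add_left (abs_add_le _ _) _)
    have h1 : |p1 * (p2 - m2)| ≤ e2 := by
      rw [abs_mul]
      calc |p1| * |p2 - m2| ≤ 1 * e2 := by
            apply mul_le_mul (abs_le.2 ⟨by linarith [hωp.1], hωp.2⟩) hω2 (abs_nonneg _)
            norm_num
        _ = e2 := one_mul e2
    have h2 : |(p1 - m1) * m2| ≤ e1 := by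
      rw [abs_mul]
      calc |p1 - m1| * |m2| ≤ e1 * 1 := by
            apply mul_le_mul hω1 (abs_le.2 ⟨by linarith [hωm.1], hωm.2⟩) (abs_nonneg _) he1
        _ = e1 := mul_one e1
    have h3 : |m1 * m2 - MC ω| ≤ Real.sqrt (variance M1 μ * variance M2 μ) := by
      rw [abs_sub_comm]; exact hωV
    linarith
  -- integrate
  have hInt : Integrable (fun ω => |cprob μ (sigGen MC) (A1 ∩ A2) ω - MC ω|) μ :=
    (integrable_condExp.sub hMCi).abs
  have hle : ∫ ω, |cprob μ (sigGen MC) (A1 ∩ A2) ω - MC ω| ∂μ ≤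
      Real.sqrt (variance M1 μ * variance M2 μ) + e1 + e2 := by
    have h := integral_mono_ae hInt (integrable_const _) hfinal
    simpa [integral_const, measure_univ] using h
  refine hle.trans (le_max_of_le_right ?_)
  have : 0 ≤ e1 * e2 := mul_nonneg he1 he2
  linarith
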